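/- Let K be a field, a, b, c ∈ K parameters, and (x, y, z) ∈ K³ with by + 1 ≠ 0 and ay² + 1 ≠ 0. Define x₂ = (ay²z − ay + z + b)/(by + 1) and z₂ = (bxy + x + ay − b)/(ay² + 1). Then x₂ + y + z₂ − x₂·y·z₂ = x + y + z − xyz and z₂(x₂ + ay) + b·x₂ + cy = z(x + ay) + bx + cy. -/

import Mathlib

/-- The map `R₂` of the polynomial-invariants example preserves both
invariants `I = x + y + z - xyz` and `J = z(x + ay) + bx + cy`. -/
theorem stmt_3 {K : Type*} [Field K] (a b c x y z : K)
    (h1 : b * y + 1 ≠ 0) (h2 : a * y ^ 2 + 1 ≠ 0) :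
    let x2 := (a * y ^ 2 * z - a * y + z + b) / (b * y + 1)
    let z2 := (b * x * y + x + a * y - b) / (a * y ^ 2 + 1)
    x2 + y + z2 - x2 * y * z2 = x + y + z - x * y * z ∧
    z2 * (x2 + a * y) + b * x2 + c * y = z * (x + a * y) + b * x + c * y := by
  intro x2 z2
  have h1' : y * b + 1 ≠ 0 := by rwa [mul_comm]
  have h2' : y ^ 2 * a + 1 ≠ 0 := by rwa [mul_comm]
  constructor <;> · show _ = _; simp only [x2, z2]; field_simp [h1', h2']; ring
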